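/- Sequential conjunction of dialectica spaces distributes over choice: for dialectica spaces A, B, C over 𝟜, there is an isomorphism of dialectica spaces A ▷ (B ⊔ C) ≅ (A ▷ B) ⊔ (A ▷ C), i.e., morphisms in both directions composing to identities. -/

import Mathlib

/-- The four-element set 𝟜 = {0, 1/4, 1/2, 1} as a subset of ℚ, with its usual order. -/
def Four : Set ℚ := {0, 1/4, 1/2, 1}

/-- Elements of 𝟜. -/
def F4 : Type := {q : ℚ // q ∈ Four}

instance : LE F4 := ⟨fun a b => a.1 ≤ b.1⟩

/-- A dialectica space over 𝟜 is a triple (U, X, α) with α : U → X → 𝟜. -/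
structure DSpace where
  U : Type
  X : Type
  rel : U → X → F4

/-- The morphism condition for dialectica spaces:
(f, F) : A → B requires α(u, F y) ≤ β(f u, y) for all u, y. -/
def IsMorphism (A B : DSpace) (f : A.U → B.U) (F : B.X → A.X) : Prop :=
  ∀ (u : A.U) (y : B.X), A.rel u (F y) ≤ B.rel (f u) y

/-- Sequential conjunction ▷₄ on ℚ. -/
def seqc (A B : ℚ) : ℚ :=
  if (A = 1/2 ∨ A = 1) ∧ B ≠ 0 then 1
  else if A = 1/4 ∧ B ≠ 0 then 1/4
  else 0

lemma seqc_mem (A B : ℚ) : seqc A B ∈ Four := by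
  unfold seqc Four
  split_ifs <;> simp

/-- Sequential conjunction on 𝟜. -/
def seqF (a b : F4) : F4 := ⟨seqc a.1 b.1, seqc_mem _ _⟩

/-- Sequential conjunction of dialectica spaces. -/
def dseq (A B : DSpace) : DSpace :=
  ⟨A.U × B.U, A.X × B.X, fun p q => seqF (A.rel p.1 q.1) (B.rel p.2 q.2)⟩

lemma zero_mem : (0 : ℚ) ∈ Four := by simp [Four]

/-- Choice of dialectica spaces. -/
def dchoice (A B : DSpace) : DSpace :=
  ⟨A.U ⊕ B.U, A.X ⊕ B.X, fun a b =>
    match a, b with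
    | .inl u, .inl x => A.rel u x
    | .inr v, .inr y => B.rel v y
    | _, _ => ⟨0, zero_mem⟩⟩


lemma seqc_zero (a : ℚ) : seqc a 0 = 0 := by simp [seqc]

lemma seqF_zero (a : F4) : seqF a ⟨0, zero_mem⟩ = ⟨0, zero_mem⟩ := by
  simp [seqF, seqc_zero]
  rfl

theorem dseq_distrib_dchoice (A B C : DSpace) :
    ∃ (f : (dseq A (dchoice B C)).U → (dchoice (dseq A B) (dseq A C)).U)
      (F : (dchoice (dseq A B) (dseq A C)).X → (dseq A (dchoice B C)).X)
      (g : (dchoice (dseq A B) (dseq A C)).U → (dseq A (dchoice B C)).U)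
      (G : (dseq A (dchoice B C)).X → (dchoice (dseq A B) (dseq A C)).X),
      IsMorphism (dseq A (dchoice B C)) (dchoice (dseq A B) (dseq A C)) f F ∧
      IsMorphism (dchoice (dseq A B) (dseq A C)) (dseq A (dchoice B C)) g G ∧
      g ∘ f = id ∧ f ∘ g = id ∧ F ∘ G = id ∧ G ∘ F = id := by
  refine ⟨fun p => match p with
      | (u, .inl v) => .inl (u, v)
      | (u, .inr w) => .inr (u, w),
    fun q => match q with
      | .inl (x, y) => (x, .inl y)
      | .inr (x, z) => (x, .inr z),
    fun p => match p with
      | .inl (u, v) => (u, .inl v)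
      | .inr (u, w) => (u, .inr w),
    fun q => match q with
      | (x, .inl y) => .inl (x, y)
      | (x, .inr z) => .inr (x, z), ?_, ?_, ?_, ?_, ?_, ?_⟩
  · rintro ⟨u, (v | w)⟩ (⟨x, y⟩ | ⟨x, z⟩) <;>
      simp [dseq, dchoice, IsMorphism, seqF_zero] <;> exact @le_refl ℚ _ _
  · rintro (⟨u, v⟩ | ⟨u, w⟩) ⟨x, (y | z)⟩ <;>
      simp [dseq, dchoice, IsMorphism, seqF_zero] <;> exact @le_refl ℚ _ _
  · funext p; rcases p with ⟨u, (v | w)⟩ <;> rfl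
  · funext p; rcases p with (⟨u, v⟩ | ⟨u, w⟩) <;> rfl
  · funext q; rcases q with ⟨x, (y | z)⟩ <;> rfl
  · funext q; rcases q with (⟨x, y⟩ | ⟨x, z⟩) <;> rfl
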